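/- Let p be an odd prime and f : F_{p^n} → F_p a weakly regular bent function with sign ν_f ∈ {±1} and dual f^*, so that W_f(a) = ν_f (√p^*)^n ζ_p^{f^*(a)} for all a ∈ F_{p^n}. Then for every β ∈ F_p^* and every a ∈ F_{p^n}, Σ_{x ∈ F_{p^n}} ζ_p^{β f(x) − Tr^n_1(ax)} = ν_f η₁(β)^n (√p^*)^n ζ_p^{β f^*(β⁻¹ a)}; in particular, βf is a weakly regular bent function with sign ν_f η₁(β)^n and dual (βf)^*(a) = β f^*(β⁻¹ a). -/

import Mathlib

open scoped BigOperators Pointwise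

noncomputable section

/-- The standard additive character `x ↦ ζ_p^x` of `ZMod p` into `ℂ`. -/
def ep (p : ℕ) (x : ZMod p) : ℂ :=
  Complex.exp (2 * Real.pi * Complex.I * (x.val : ℂ) / (p : ℂ))

/-- The Walsh transform of `f : V → ZMod p`, with the inner product `⟨a, x⟩ = Tr(a * x)`. -/
def walsh (p : ℕ) {V : Type*} [CommRing V] [Fintype V] [Algebra (ZMod p) V]
    (f : V → ZMod p) (a : V) : ℂ :=
  ∑ x : V, ep p (f x - (Algebra.trace (ZMod p) V) (a * x))

/-- `f` is bent: `|W_f(a)| = √(card V)` for all `a`. -/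
def IsBent (p : ℕ) {V : Type*} [CommRing V] [Fintype V] [Algebra (ZMod p) V]
    (f : V → ZMod p) : Prop :=
  ∀ a : V, ‖walsh p f a‖ = Real.sqrt (Fintype.card V)

/-- The component function `F_c = Tr^s_1(c ⬝ F(·))` of a vectorial function. -/
def comp (p : ℕ) {V K : Type*} [CommRing K] [Algebra (ZMod p) K]
    (F : V → K) (c : K) : V → ZMod p :=
  fun x => (Algebra.trace (ZMod p) K) (c * F x)

/-- `D` is a `(v, k, λ, μ)` partial difference set in the additive group `G`. -/
def IsPDS {G : Type*} [AddGroup G] (D : Set G) (v k lam mu : ℚ) : Prop :=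
  (Nat.card G : ℚ) = v ∧ (Nat.card D : ℚ) = k ∧
  ∀ g : G, g ≠ 0 →
    (g ∈ D → (Nat.card {xy : D × D // (xy.1 : G) - (xy.2 : G) = g} : ℚ) = lam) ∧
    (g ∉ D → (Nat.card {xy : D × D // (xy.1 : G) - (xy.2 : G) = g} : ℚ) = mu)


/-- `√(p^*)`, where `p^* = (−1)^{(p−1)/2} p`. -/
def sqrtPStar (p : ℕ) : ℂ :=
  if p % 4 = 1 then (Real.sqrt p : ℂ) else Complex.I * (Real.sqrt p : ℂ)

/-- if `f : F_{p^n} → F_p` is weakly regular bent with sign `ν_f` and dual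
`f^*`, then for every `β ∈ F_p^*` the Walsh transform of `βf` satisfies
`W_{βf}(a) = ν_f η₁(β)^n (√p^*)^n ζ_p^{β f^*(β⁻¹a)}`; in particular `βf` is weakly regular
bent with sign `ν_f η₁(β)^n` and dual `(βf)^*(a) = β f^*(β⁻¹a)`. -/
theorem statement15
    (p n : ℕ) [Fact p.Prime] (hp : Odd p) (hn : 0 < n)
    (Fn : Type) [Field Fn] [Fintype Fn] [Algebra (ZMod p) Fn]
    (hcardn : Fintype.card Fn = p ^ n)
    (f : Fn → ZMod p)
    (ν : ℂ) (hν : ν = 1 ∨ ν = -1) (fstar : Fn → ZMod p)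
    (hwr : ∀ a : Fn, walsh p f a = ν * (sqrtPStar p) ^ n * ep p (fstar a)) :
    ∀ (β : (ZMod p)ˣ) (a : Fn),
      walsh p (fun x => (β : ZMod p) * f x) a
        = ν * (if IsSquare β then 1 else (-1 : ℂ)) ^ n * (sqrtPStar p) ^ n
            * ep p ((β : ZMod p) * fstar (((β⁻¹ : (ZMod p)ˣ) : ZMod p) • a)) := by
  intro β a
  have hppr := Fact.out (p := p.Prime)
  have hp0 : p ≠ 0 := hppr.ne_zero
  haveI : Fact (1 < p) := ⟨hppr.one_lt⟩
  have hp2 : p ≠ 2 := by rintro rfl; exact (by decide : ¬ Odd 2) hp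
  set ζ : ℂ := Complex.exp (2 * Real.pi * Complex.I / p) with hζdef
  have hζ : IsPrimitiveRoot ζ p := Complex.isPrimitiveRoot_exp p hp0
  have h1 : ζ ^ p = 1 := hζ.pow_eq_one
  have hmod : ∀ k : ℕ, ζ ^ (k % p) = ζ ^ k := by
    intro k
    conv_rhs => rw [← Nat.mod_add_div k p]
    rw [pow_add, pow_mul, h1, one_pow, mul_one]
  have hep : ∀ x : ZMod p, ep p x = ζ ^ x.val := by
    intro x; rw [ep, ← Complex.exp_nat_mul]; ring_nf
  set ψ : AddChar (ZMod p) ℂ := AddChar.zmodChar p h1 with hψdef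
  have hψap : ∀ x : ZMod p, ψ x = ζ ^ x.val := fun x => AddChar.zmodChar_apply h1 x
  have hψprim : ψ.IsPrimitive := AddChar.zmodChar_primitive_of_primitive_root p hζ
  -- characters
  set χℤ := quadraticChar (ZMod p) with hχℤdef
  set χ : MulChar (ZMod p) ℂ := χℤ.ringHomComp (Int.castRingHom ℂ) with hχdef
  have hringchar : ringChar (ZMod p) ≠ 2 := by rw [ZMod.ringChar_zmod_n]; exact hp2
  have hχquad : χ.IsQuadratic := (quadraticChar_isQuadratic (ZMod p)).comp _
  have hχne : χ ≠ 1 := by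
    obtain ⟨u, hu⟩ := quadraticChar_exists_neg_one' hringchar
    intro h
    have h2 : χ (u : ZMod p) = 1 := by rw [h]; exact MulChar.one_apply_coe u
    rw [hχdef, MulChar.ringHomComp_apply, hu] at h2
    norm_num at h2
  set τ := gaussSum χ ψ with hτdef
  have hcard : (Fintype.card (ZMod p) : ℂ) ≠ 0 := by
    rw [ZMod.card]; exact_mod_cast (Nat.cast_ne_zero (R := ℂ)).mpr hp0
  have hτne : τ ≠ 0 := gaussSum_ne_zero_of_nontrivial hcard hχne hψprim
  have hτsq : τ ^ 2 = χ (-1) * Fintype.card (ZMod p) := gaussSum_sq hχne hχquad hψprim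
  -- compute χ(-1) * p = S^2
  set S := sqrtPStar p with hSdef
  have hp4 : p % 4 = 1 ∨ p % 4 = 3 := Nat.odd_mod_four_iff.mp (Nat.odd_iff.mp hp)
  have hχm1 : χ (-1) = (if p % 4 = 1 then 1 else -1 : ℂ) := by
    have h := quadraticChar_neg_one (F := ZMod p) hringchar
    rw [ZMod.card] at h
    rw [hχdef, MulChar.ringHomComp_apply, hχℤdef, h]
    rcases hp4 with h4 | h4
    · rw [ZMod.χ₄_nat_one_mod_four h4, if_pos h4]; norm_num
    · rw [ZMod.χ₄_nat_three_mod_four h4, if_neg (by omega)]; norm_num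
  have hSsq : S ^ 2 = χ (-1) * Fintype.card (ZMod p) := by
    rw [hχm1, ZMod.card, hSdef, sqrtPStar]
    have hsp : ((Real.sqrt p : ℂ)) ^ 2 = (p : ℂ) := by
      rw [← Complex.ofReal_pow, Real.sq_sqrt (by positivity)]; norm_num
    rcases hp4 with h4 | h4
    · simp [if_pos h4, hsp]
    · simp only [if_neg (show ¬ p % 4 = 1 by omega), mul_pow, hsp, Complex.I_sq]
  have hSne : S ≠ 0 := by
    have hsqrtp : (Real.sqrt p : ℂ) ≠ 0 :=
      Complex.ofReal_ne_zero.mpr (ne_of_gt (Real.sqrt_pos.mpr (by exact_mod_cast hppr.pos)))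
    rw [hSdef, sqrtPStar]
    split_ifs
    · exact hsqrtp
    · exact mul_ne_zero Complex.I_ne_zero hsqrtp
  obtain ⟨δ, hτδ, hδδ⟩ : ∃ d : ℂ, τ = d * S ∧ d * d = 1 := by
    refine ⟨τ / S, by field_simp, ?_⟩
    rw [div_mul_div_comm, ← pow_two, ← pow_two, hτsq, ← hSsq, div_self (pow_ne_zero 2 hSne)]
  -- the rational sign ε with (ε : ℂ) = ν * δ ^ n
  have hδn : δ ^ n = 1 ∨ δ ^ n = -1 := by
    rcases mul_self_eq_one_iff.mp hδδ with h | h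
    · left; rw [h, one_pow]
    · rcases Nat.even_or_odd n with he | ho
      · left; rw [h, he.neg_one_pow]
      · right; rw [h, ho.neg_one_pow]
  obtain ⟨ε, hε⟩ : ∃ q : ℚ, (q : ℂ) = ν * δ ^ n := by
    rcases hν with h | h <;> rcases hδn with h' | h'
    · exact ⟨1, by rw [h, h']; norm_num⟩
    · exact ⟨-1, by rw [h, h']; norm_num⟩
    · exact ⟨-1, by rw [h, h']; norm_num⟩
    · exact ⟨1, by rw [h, h']; norm_num⟩
  -- setting up the polynomials
  set b : Fn := ((β⁻¹ : (ZMod p)ˣ) : ZMod p) • a with hbdef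
  set c : ZMod p := fstar b with hcdef
  set e : Fn → ℕ := fun x => (f x - (Algebra.trace (ZMod p) Fn) (b * x)).val with hedef
  set g : Polynomial ℚ := ∑ x : Fn, Polynomial.X ^ (e x) with hgdef
  set G : Polynomial ℚ := ∑ t : ZMod p, Polynomial.C ((χℤ t : ℤ) : ℚ) * Polynomial.X ^ t.val
    with hGdef
  set P : Polynomial ℚ := g - Polynomial.C ε * G ^ n * Polynomial.X ^ c.val with hPdef
  have hpowval : ∀ u v : ZMod p, ζ ^ (u.val * v.val) = ζ ^ ((u * v).val) := by
    intro u v; rw [ZMod.val_mul, hmod]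
  -- evaluation of G at ζ ^ (u.val)
  have hGeval : ∀ u : (ZMod p)ˣ,
      Polynomial.aeval (ζ ^ ((u : ZMod p)).val) G = gaussSum χ (ψ.mulShift (u : ZMod p)) := by
    intro u
    rw [hGdef, map_sum, gaussSum]
    refine Finset.sum_congr rfl fun t _ => ?_
    rw [map_mul, Polynomial.aeval_C, map_pow, Polynomial.aeval_X, AddChar.mulShift_apply,
      hψap, ← pow_mul, hpowval]
    congr 1
  -- evaluation of g at ζ ^ (u.val)
  have hgeval : ∀ u : (ZMod p)ˣ,
      Polynomial.aeval (ζ ^ ((u : ZMod p)).val) g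
        = ∑ x : Fn, ep p ((u : ZMod p) * (f x - (Algebra.trace (ZMod p) Fn) (b * x))) := by
    intro u
    rw [hgdef, map_sum]
    refine Finset.sum_congr rfl fun x _ => ?_
    rw [map_pow, Polynomial.aeval_X, hedef, ← pow_mul, hpowval, hep]
  -- `g(ζ) = ν S^n ζ^c`, hence `aeval ζ P = 0`
  have hone : ((1 : (ZMod p)ˣ) : ZMod p).val = 1 := by
    rw [Units.val_one, ZMod.val_one]
  have hgζ : Polynomial.aeval ζ g = ν * S ^ n * ζ ^ c.val := by
    have h := hgeval 1
    rw [hone, pow_one] at h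
    simp only [Units.val_one, one_mul] at h
    rw [h, ← walsh, hwr b, hcdef, hep]
  have hGζ : Polynomial.aeval ζ G = τ := by
    have h := hGeval 1
    rw [hone, pow_one] at h
    rw [h, Units.val_one, AddChar.mulShift_one]
  have hPζ : Polynomial.aeval ζ P = 0 := by
    rw [hPdef, map_sub, map_mul, map_mul, map_pow, map_pow, Polynomial.aeval_C,
      Polynomial.aeval_X, hgζ, hGζ, eq_ratCast, hε, hτδ]
    have hδn2 : δ ^ n * δ ^ n = 1 := by rw [← mul_pow, hδδ, one_pow]
    linear_combination (-(ν * S ^ n * ζ ^ c.val)) * hδn2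
  -- transfer the root to ζ ^ B
  set B : ℕ := ((β : ZMod p)).val with hBdef
  have hPζB : Polynomial.aeval (ζ ^ B) P = 0 := by
    have hdvd : minpoly ℚ ζ ∣ P := minpoly.dvd ℚ ζ hPζ
    rw [← Polynomial.cyclotomic_eq_minpoly_rat hζ hppr.pos] at hdvd
    obtain ⟨Q, hQ⟩ := hdvd
    have hprim : IsPrimitiveRoot (ζ ^ B) p :=
      hζ.pow_of_coprime B (ZMod.val_coe_unit_coprime β)
    have hcyc : Polynomial.aeval (ζ ^ B) (Polynomial.cyclotomic p ℚ) = 0 := by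
      rw [Polynomial.aeval_def, ← Polynomial.eval_map, Polynomial.map_cyclotomic]
      exact hprim.isRoot_cyclotomic hppr.pos
    rw [hQ, map_mul, hcyc, zero_mul]
  -- unpack the equation at ζ ^ B
  rw [hPdef, map_sub, map_mul, map_mul, map_pow, map_pow, Polynomial.aeval_C,
    Polynomial.aeval_X, sub_eq_zero, eq_ratCast, hε, hgeval β, hGeval β] at hPζB
  -- the Gauss sum with the shifted character
  set η : ℂ := if IsSquare β then 1 else -1 with hηdef
  have hχβ : χ ((β : ZMod p)) = η := by
    rw [hχdef, MulChar.ringHomComp_apply, hχℤdef, hηdef]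
    by_cases hs : IsSquare β
    · rw [if_pos hs]
      have hsq : IsSquare ((β : ZMod p)) := hs.map (Units.coeHom (ZMod p))
      rw [(quadraticChar_one_iff_isSquare (β.ne_zero)).mpr hsq]
      norm_num
    · rw [if_neg hs]
      have hns : ¬ IsSquare ((β : ZMod p)) := by
        rintro ⟨r, hr⟩
        apply hs
        have hr0 : r ≠ 0 := by
          rintro rfl
          rw [mul_zero] at hr
          exact β.ne_zero hr
        exact ⟨Units.mk0 r hr0, Units.ext (by simp [hr])⟩
      rw [quadraticChar_neg_one_iff_not_isSquare.mpr hns]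
      norm_num
  have hηη : η * η = 1 := by rw [hηdef]; split_ifs <;> norm_num
  have hshift : gaussSum χ (ψ.mulShift ((β : ZMod p))) = η * τ := by
    have h := gaussSum_mulShift χ ψ β
    rw [hχβ] at h
    rw [hτdef, ← h, ← mul_assoc, hηη, one_mul]
  rw [hshift] at hPζB
  -- identify the left-hand side with the Walsh transform of β•f
  have htr : ∀ x : Fn, (Algebra.trace (ZMod p) Fn) (a * x)
      = (β : ZMod p) * (Algebra.trace (ZMod p) Fn) (b * x) := by
    intro x
    have ha : a = (β : ZMod p) • b := by
      rw [hbdef, smul_smul, ← Units.val_mul, mul_inv_cancel, Units.val_one, one_smul]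
    rw [ha, smul_mul_assoc, map_smul, smul_eq_mul]
  have hlhs : walsh p (fun x => (β : ZMod p) * f x) a
      = ∑ x : Fn, ep p ((β : ZMod p) * (f x - (Algebra.trace (ZMod p) Fn) (b * x))) := by
    rw [walsh]
    refine Finset.sum_congr rfl fun x _ => ?_
    rw [htr x, mul_sub]
  -- conclude
  rw [hlhs, hPζB, ← pow_mul, hpowval, hep]
  have hδn2 : δ ^ n * δ ^ n = 1 := by rw [← mul_pow, hδδ, one_pow]
  rw [hτδ]
  linear_combination (ν * η ^ n * S ^ n * ζ ^ (((β : ZMod p) * c).val)) * hδn2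

end
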